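/- Let X be a Banach lattice. Then X is uniformly monotone for orthogonal elements if and only if X has the strong Bishop–Phelps–Bollobás property for positive functionals. -/

import Mathlib

open HasSolidNorm Filter Topology

set_option linter.unusedSectionVars false
set_option maxHeartbeats 2000000


/-- Tailored Ekeland variational principle for a continuous linear functional bounded above
on a closed subset of a Banach space. -/
lemma my_ekeland {X : Type*} [NormedAddCommGroup X] [NormedSpace ℝ X] [CompleteSpace X]
    (D : Set X) (hD : IsClosed D) (f : X →L[ℝ] ℝ)
    (hb : ∀ w ∈ D, f w ≤ 1) (x₀ : X) (hx₀ : x₀ ∈ D) {s : ℝ} (hs : 0 < s) :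
    ∃ v ∈ D, f x₀ ≤ f v ∧ s * ‖v - x₀‖ ≤ f v - f x₀ ∧
      ∀ w ∈ D, w ≠ v → f w < f v + s * ‖w - v‖ := by
  classical
  set S : X → Set X := fun u => {w | w ∈ D ∧ s * ‖w - u‖ ≤ f w - f u} with hS
  have hSself : ∀ u ∈ D, u ∈ S u := by
    intro u hu; exact ⟨hu, by simp⟩
  have hbdd : ∀ u : X, BddAbove (f '' S u) := by
    intro u; exact ⟨1, by rintro r ⟨w, hw, rfl⟩; exact hb w hw.1⟩
  set m : X → ℝ := fun u => sSup (f '' S u) with hm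
  have hm_ge : ∀ u ∈ D, f u ≤ m u := fun u hu => le_csSup (hbdd u) ⟨u, hSself u hu, rfl⟩
  have hm_ub : ∀ u : X, ∀ w ∈ S u, f w ≤ m u := fun u w hw => le_csSup (hbdd u) ⟨w, hw, rfl⟩
  have hSmono : ∀ u u' : X, u' ∈ S u → S u' ⊆ S u := by
    intro u u' hu' w hw
    refine ⟨hw.1, ?_⟩
    have h1 : ‖w - u‖ ≤ ‖w - u'‖ + ‖u' - u‖ := norm_sub_le_norm_sub_add_norm_sub w u' u
    nlinarith [hw.2, hu'.2]
  have hstep : ∀ u : {z : X // z ∈ D}, ∃ u' : {z : X // z ∈ D},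
      u'.1 ∈ S u.1 ∧ m u.1 - f u'.1 ≤ (m u.1 - f u.1) / 2 := by
    rintro ⟨u, hu⟩
    rcases le_or_gt (m u) (f u) with hle | hlt
    · exact ⟨⟨u, hu⟩, hSself u hu, by simp only; linarith [hm_ge u hu]⟩
    · have hne : (f '' S u).Nonempty := ⟨f u, u, hSself u hu, rfl⟩
      obtain ⟨r, ⟨w, hwS, rfl⟩, hr⟩ :=
        exists_lt_of_lt_csSup hne (show m u - (m u - f u) / 2 < m u by linarith)
      exact ⟨⟨w, hwS.1⟩, hwS, by simp only; linarith⟩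
  choose T hT1 hT2 using hstep
  set v : ℕ → {z : X // z ∈ D} := fun n => T^[n] ⟨x₀, hx₀⟩ with hv
  have hvsucc : ∀ n, v (n + 1) = T (v n) := fun n => Function.iterate_succ_apply' T n _
  have hmem : ∀ n, (v (n + 1)).1 ∈ S (v n).1 := by
    intro n; rw [hvsucc]; exact hT1 (v n)
  have hsub : ∀ n k, n ≤ k → S (v k).1 ⊆ S (v n).1 := by
    intro n k hk
    induction k, hk using Nat.le_induction with
    | base => exact subset_rfl
    | succ k hk ih => exact subset_trans (hSmono _ _ (hmem k)) ih
  have hmemall : ∀ n k, n ≤ k → (v k).1 ∈ S (v n).1 :=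
    fun n k hk => hsub n k hk (hSself _ (v k).2)
  set a : ℕ → ℝ := fun n => m (v n).1 - f (v n).1 with ha
  have ha0 : ∀ n, 0 ≤ a n := fun n => by
    have := hm_ge (v n).1 (v n).2; simp only [ha]; linarith
  have hm_mono : ∀ n, m (v (n + 1)).1 ≤ m (v n).1 := by
    intro n
    refine csSup_le ⟨f (v (n+1)).1, (v (n+1)).1, hSself _ ((hmem n).1), rfl⟩ ?_
    rintro r ⟨w, hwS, rfl⟩
    exact hm_ub _ w (hSmono _ _ (hmem n) hwS)
  have ha_half : ∀ n, a (n + 1) ≤ a n / 2 := by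
    intro n
    have h1 := hT2 (v n)
    have h2 := hm_mono n
    have h4 : v (n+1) = T (v n) := hvsucc n
    have h5 : m (T (v n)).1 ≤ m (v n).1 := by rw [← h4]; exact h2
    simp only [ha]
    rw [h4]
    linarith
  have ha_geom : ∀ n, a n ≤ a 0 * (1 / 2) ^ n := by
    intro n
    induction n with
    | zero => simp
    | succ n ih =>
      calc a (n + 1) ≤ a n / 2 := ha_half n
      _ ≤ a 0 * (1 / 2) ^ n / 2 := by linarith
      _ = a 0 * (1 / 2) ^ (n + 1) := by ring
  have hdist : ∀ n, dist ((v n).1) ((v (n+1)).1) ≤ (a 0 / s) * (1 / 2) ^ n := by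
    intro n
    have h1 := (hmem n).2
    have h2 : f (v (n+1)).1 ≤ m (v n).1 := hm_ub _ _ (hmem n)
    have h3 : s * ‖(v (n+1)).1 - (v n).1‖ ≤ a n := by simp only [ha]; linarith
    rw [dist_eq_norm, norm_sub_rev]
    rw [div_mul_eq_mul_div, le_div_iff₀ hs]
    calc ‖(v (n+1)).1 - (v n).1‖ * s = s * ‖(v (n+1)).1 - (v n).1‖ := mul_comm _ _
    _ ≤ a n := h3
    _ ≤ a 0 * (1/2) ^ n := ha_geom n
  have hcauchy : CauchySeq (fun n => (v n).1) :=
    cauchySeq_of_le_geometric (1/2) (a 0 / s) (by norm_num) hdist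
  obtain ⟨L, hL⟩ := cauchySeq_tendsto_of_complete hcauchy
  have hSclosed : ∀ u : X, IsClosed (S u) := by
    intro u
    have : S u = D ∩ {w | s * ‖w - u‖ ≤ f w - f u} := rfl
    rw [this]
    exact hD.inter (isClosed_le (by fun_prop) (by fun_prop))
  have hLS : ∀ n, L ∈ S (v n).1 := by
    intro n
    refine (hSclosed (v n).1).mem_of_tendsto hL ?_
    filter_upwards [eventually_ge_atTop n] with k hk
    exact hmemall n k hk
  have hLD : L ∈ D := (hLS 0).1
  have hL0 := (hLS 0).2
  refine ⟨L, hLD, ?_, ?_, ?_⟩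
  · have h1 : 0 ≤ s * ‖L - x₀‖ := by positivity
    simp only [hv, Function.iterate_zero_apply] at hL0
    linarith
  · simpa only [hv, Function.iterate_zero_apply] using hL0
  · intro w hwD hwne
    by_contra hcon
    push_neg at hcon
    have hwS : ∀ n, w ∈ S (v n).1 := by
      intro n
      refine ⟨hwD, ?_⟩
      have h1 : ‖w - (v n).1‖ ≤ ‖w - L‖ + ‖L - (v n).1‖ := norm_sub_le_norm_sub_add_norm_sub _ _ _
      nlinarith [(hLS n).2, hcon]
    have h2 : ∀ n, s * ‖w - (v n).1‖ ≤ a 0 * (1/2)^n := by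
      intro n
      have h3 := (hwS n).2
      have h4 : f w ≤ m (v n).1 := hm_ub _ _ (hwS n)
      calc s * ‖w - (v n).1‖ ≤ a n := by simp only [ha]; linarith
      _ ≤ _ := ha_geom n
    have h5 : Tendsto (fun n => s * ‖w - (v n).1‖) atTop (𝓝 (s * ‖w - L‖)) :=
      ((tendsto_const_nhds.sub hL).norm).const_mul s
    have h6 : Tendsto (fun n : ℕ => a 0 * (1/2)^n) atTop (𝓝 0) := by
      have := tendsto_pow_atTop_nhds_zero_of_lt_one (show (0:ℝ) ≤ 1/2 by norm_num)
        (show (1:ℝ)/2 < 1 by norm_num)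
      simpa using this.const_mul (a 0)
    have h7 : s * ‖w - L‖ ≤ 0 := le_of_tendsto_of_tendsto' h5 h6 h2
    have h8 : ‖w - L‖ = 0 := le_antisymm (by nlinarith) (norm_nonneg _)
    exact hwne (by rwa [norm_sub_eq_zero_iff] at h8)

/-- A Banach lattice is *uniformly monotone for orthogonal elements* (UMOE) if for every
`0 < ε < 1` there is `0 < δ < ε` such that `‖x‖ ≤ 1` and `‖x⁺‖ > 1 - δ` imply `‖x⁻‖ < ε`. -/
def UniformlyMonotoneOrthogonal (X : Type*) [NormedAddCommGroup X] [Lattice X] [IsOrderedAddMonoid X] [HasSolidNorm X] : Prop :=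
  ∀ ε : ℝ, 0 < ε → ε < 1 → ∃ δ : ℝ, 0 < δ ∧ δ < ε ∧
    ∀ x : X, ‖x‖ ≤ 1 → 1 - δ < ‖x ⊔ 0‖ → ‖(-x) ⊔ 0‖ < ε

/-- The *strong Bishop–Phelps–Bollobás property for positive functionals*: the BPB property
for positive functionals in which the new norm-attaining point `y` can be chosen positive. -/
def StrongBPBppPositive (X : Type*) [NormedAddCommGroup X] [Lattice X] [IsOrderedAddMonoid X] [HasSolidNorm X] [NormedSpace ℝ X] : Prop :=
  ∀ ε : ℝ, 0 < ε → ε < 1 → ∃ η : ℝ, 0 < η ∧ η < ε ∧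
    ∀ f : X →L[ℝ] ℝ, (∀ z : X, 0 ≤ z → 0 ≤ f z) → ‖f‖ = 1 →
      ∀ x₀ : X, ‖x₀‖ = 1 → 1 - η < f x₀ →
        ∃ (y : X) (g : X →L[ℝ] ℝ), 0 ≤ y ∧ ‖y‖ = 1 ∧
          (∀ z : X, 0 ≤ z → 0 ≤ g z) ∧ ‖g‖ = 1 ∧
          g y = 1 ∧ ‖y - x₀‖ < ε ∧ ‖g - f‖ < ε

section Main
variable {X : Type*} [NormedAddCommGroup X] [Lattice X] [IsOrderedAddMonoid X] [HasSolidNorm X] [NormedSpace ℝ X] [PosSMulStrictMono ℝ X] [PosSMulReflectLT ℝ X]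
variable {X : Type*} [NormedAddCommGroup X] [Lattice X] [IsOrderedAddMonoid X] [HasSolidNorm X] [NormedSpace ℝ X] [PosSMulStrictMono ℝ X] [PosSMulReflectLT ℝ X]

lemma my_smul_le_smul {a b : X} (c : ℝ) (hc : 0 ≤ c) (h : a ≤ b) : c • a ≤ c • b :=
  smul_le_smul_of_nonneg_left h hc

lemma my_scalar_mono {c d : ℝ} (h : c ≤ d) {a : X} (ha : 0 ≤ a) : c • a ≤ d • a := by
  have h2 : 0 ≤ (d - c) • a := smul_nonneg (by linarith) ha
  calc c • a ≤ c • a + (d - c) • a := le_add_of_nonneg_right h2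
  _ = d • a := by rw [← add_smul]; ring_nf

lemma my_smul_sup (c : ℝ) (hc : 0 ≤ c) (a b : X) : c • (a ⊔ b) = (c • a) ⊔ (c • b) := by
  rcases eq_or_lt_of_le hc with rfl | hc'
  · simp
  · apply le_antisymm
    · have h : a ⊔ b ≤ c⁻¹ • ((c • a) ⊔ (c • b)) := by
        apply sup_le
        · calc a = c⁻¹ • (c • a) := by rw [smul_smul, inv_mul_cancel₀ hc'.ne', one_smul]
          _ ≤ c⁻¹ • ((c • a) ⊔ (c • b)) := my_smul_le_smul _ (by positivity) le_sup_left
        · calc b = c⁻¹ • (c • b) := by rw [smul_smul, inv_mul_cancel₀ hc'.ne', one_smul]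
          _ ≤ c⁻¹ • ((c • a) ⊔ (c • b)) := my_smul_le_smul _ (by positivity) le_sup_right
      calc c • (a ⊔ b) ≤ c • (c⁻¹ • ((c • a) ⊔ (c • b))) := my_smul_le_smul _ hc h
      _ = (c • a) ⊔ (c • b) := by rw [smul_smul, mul_inv_cancel₀ hc'.ne', one_smul]
    · exact sup_le (my_smul_le_smul _ hc le_sup_left) (my_smul_le_smul _ hc le_sup_right)

lemma my_smul_inf (c : ℝ) (hc : 0 ≤ c) (a b : X) : c • (a ⊓ b) = (c • a) ⊓ (c • b) := by
  rcases eq_or_lt_of_le hc with rfl | hc'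
  · simp
  · apply le_antisymm
    · exact le_inf (my_smul_le_smul _ hc inf_le_left) (my_smul_le_smul _ hc inf_le_right)
    · have h : c⁻¹ • ((c • a) ⊓ (c • b)) ≤ a ⊓ b := by
        apply le_inf
        · calc c⁻¹ • ((c • a) ⊓ (c • b)) ≤ c⁻¹ • (c • a) :=
                my_smul_le_smul _ (by positivity) inf_le_left
          _ = a := by rw [smul_smul, inv_mul_cancel₀ hc'.ne', one_smul]
        · calc c⁻¹ • ((c • a) ⊓ (c • b)) ≤ c⁻¹ • (c • b) :=
                my_smul_le_smul _ (by positivity) inf_le_right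
          _ = b := by rw [smul_smul, inv_mul_cancel₀ hc'.ne', one_smul]
      calc (c • a) ⊓ (c • b) = c • (c⁻¹ • ((c • a) ⊓ (c • b))) := by
            rw [smul_smul, mul_inv_cancel₀ hc'.ne', one_smul]
      _ ≤ c • (a ⊓ b) := my_smul_le_smul _ hc h

lemma my_smul_posPart (c : ℝ) (hc : 0 ≤ c) (x : X) : (c • x) ⊔ 0 = c • (x ⊔ 0) := by
  rw [my_smul_sup c hc, smul_zero]

lemma my_norm_mono {a b : X} (h0 : 0 ≤ a) (h : a ≤ b) : ‖a‖ ≤ ‖b‖ := by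
  apply solid
  rw [abs_of_nonneg h0, abs_of_nonneg (h0.trans h)]
  exact h

lemma my_norm_posPart_le (x : X) : ‖x ⊔ 0‖ ≤ ‖x‖ := by
  rw [← norm_abs_eq_norm x]
  exact my_norm_mono le_sup_right (sup_le (le_abs_self x) (abs_nonneg x))

lemma my_posPart_sub (x : X) : (x ⊔ 0) - ((-x) ⊔ 0) = x := by
  simpa [posPart_def, negPart_def] using posPart_sub_negPart x

lemma my_disj (x : X) : (x ⊔ 0) ⊓ ((-x) ⊔ 0) = 0 := by
  simpa [posPart_def, negPart_def] using posPart_inf_negPart_eq_zero x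

lemma my_sup_of_disjoint {u w : X} (hd : u ⊓ w = 0) : (u - w) ⊔ 0 = u := by
  have h1 : (u - w) ⊔ 0 = (u ⊔ w) - w := by
    rw [show (0 : X) = w - w by simp]
    exact (sup_sub u w w).symm
  have h2 : u ⊔ w = u + w := by
    have h3 := inf_add_sup u w
    rw [hd, zero_add] at h3
    exact h3
  rw [h1, h2]; abel

lemma my_posPart_add_le (a b : X) : ‖(a + b) ⊔ 0‖ ≤ ‖a ⊔ 0‖ + ‖b ⊔ 0‖ := by
  have h1 : (a + b) ⊔ 0 ≤ (a ⊔ 0) + (b ⊔ 0) := by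
    apply sup_le (add_le_add le_sup_left le_sup_left)
    exact add_nonneg le_sup_right le_sup_right
  exact (my_norm_mono le_sup_right h1).trans (norm_add_le _ _)

/-- A positive norm-one functional with `f x = ‖x⁺‖` (and vanishing on `x⁻`). -/
lemma exists_pos_norming (x : X) (hp : x ⊔ 0 ≠ 0) :
    ∃ f : X →L[ℝ] ℝ, (∀ z, 0 ≤ z → 0 ≤ f z) ∧ ‖f‖ = 1 ∧ f x = ‖x ⊔ 0‖ := by
  set p : X := x ⊔ 0 with hpdef
  set w : X := (-x) ⊔ 0 with hwdef
  have hp0 : 0 ≤ p := le_sup_right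
  have hw0 : 0 ≤ w := le_sup_right
  have hdisj : p ⊓ w = 0 := my_disj x
  -- the sublinear functional
  set N : X → ℝ := fun z => ⨅ t : ℝ, ‖(z - t • w) ⊔ 0‖ with hNdef
  have bdd : ∀ z : X, BddBelow (Set.range fun t : ℝ => ‖(z - t • w) ⊔ 0‖) := by
    intro z; exact ⟨0, by rintro r ⟨t, rfl⟩; positivity⟩
  have N_le : ∀ (z : X) (t : ℝ), N z ≤ ‖(z - t • w) ⊔ 0‖ := fun z t => ciInf_le (bdd z) t
  have N_nonneg : ∀ z : X, 0 ≤ N z := fun z => le_ciInf fun t => norm_nonneg _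
  have N_add : ∀ y z : X, N (y + z) ≤ N y + N z := by
    intro y z
    have key : ∀ t t' : ℝ, N (y + z) ≤ ‖(y - t • w) ⊔ 0‖ + ‖(z - t' • w) ⊔ 0‖ := by
      intro t t'
      have h1 : y + z - (t + t') • w = (y - t • w) + (z - t' • w) := by
        rw [add_smul]; abel
      calc N (y + z) ≤ ‖(y + z - (t + t') • w) ⊔ 0‖ := N_le _ _
      _ = ‖((y - t • w) + (z - t' • w)) ⊔ 0‖ := by rw [h1]
      _ ≤ _ := my_posPart_add_le _ _
    have h2 : N (y + z) - N z ≤ N y := by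
      apply le_ciInf
      intro t
      have h3 : N (y + z) - ‖(y - t • w) ⊔ 0‖ ≤ N z := by
        apply le_ciInf
        intro t'
        linarith [key t t']
      linarith
    linarith
  have N_hom : ∀ c : ℝ, 0 < c → ∀ z : X, N (c • z) = c * N z := by
    intro c hc z
    have hsm : ∀ s t : ℝ, s = c * t → ‖(c • z - s • w) ⊔ 0‖ = c * ‖(z - t • w) ⊔ 0‖ := by
      intro s t hst
      have h1 : c • z - s • w = c • (z - t • w) := by
        rw [hst, smul_sub, mul_smul]
      rw [h1, my_smul_posPart c hc.le, norm_smul, Real.norm_eq_abs, abs_of_pos hc]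
    apply le_antisymm
    · rw [← div_le_iff₀' hc]
      apply le_ciInf
      intro t
      rw [div_le_iff₀' hc, ← hsm (c * t) t rfl]
      exact N_le _ _
    · apply le_ciInf
      intro s
      calc c * N z ≤ c * ‖(z - (s / c) • w) ⊔ 0‖ := by nlinarith [N_le z (s / c)]
      _ = ‖(c • z - s • w) ⊔ 0‖ := (hsm s (s / c) (by field_simp)).symm
  -- domination on the span of p
  have hdisj' : ∀ c t : ℝ, 0 ≤ c → 0 ≤ t → (c • p) ⊓ (t • w) = 0 := by
    intro c t hc ht
    apply le_antisymm
    · set m : ℝ := max c t with hm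
      have hm0 : 0 ≤ m := le_trans hc (le_max_left _ _)
      calc (c • p) ⊓ (t • w) ≤ (m • p) ⊓ (m • w) :=
            inf_le_inf (my_scalar_mono (le_max_left _ _) hp0) (my_scalar_mono (le_max_right _ _) hw0)
      _ = m • (p ⊓ w) := (my_smul_inf m hm0 p w).symm
      _ = 0 := by rw [hdisj, smul_zero]
    · exact le_inf (smul_nonneg hc hp0) (smul_nonneg ht hw0)
  have key_eval : ∀ c : ℝ, 0 ≤ c → ∀ t : ℝ, c * ‖p‖ ≤ ‖(c • p - t • w) ⊔ 0‖ := by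
    intro c hc t
    have h1 : (c • p - (max t 0) • w) ⊔ 0 = c • p :=
      my_sup_of_disjoint (hdisj' c (max t 0) hc (le_max_right _ _))
    have h2 : c • p - (max t 0) • w ≤ c • p - t • w :=
      sub_le_sub_left (my_scalar_mono (le_max_left _ _) hw0) _
    have h3 : c • p ≤ (c • p - t • w) ⊔ 0 := by
      have h3' := sup_le_sup_right h2 (0:X)
      rw [h1] at h3'
      exact h3'
    have h4 := my_norm_mono (smul_nonneg hc hp0) h3
    rw [norm_smul, Real.norm_eq_abs, abs_of_nonneg hc] at h4
    exact h4
  -- the partial linear map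
  have HH : ∀ c : ℝ, c • p = 0 → c • (‖p‖ : ℝ) = 0 := by
    intro c hcp
    have hc0 : c = 0 := by
      by_contra hc0
      exact hp (by
        have h5 := congrArg (fun z => c⁻¹ • z) hcp
        simpa [smul_smul, inv_mul_cancel₀ hc0, hpdef] using h5)
    simp [hc0]
  set φ : X →ₗ.[ℝ] ℝ := LinearPMap.mkSpanSingleton' p ‖p‖ HH with hφdef
  have hφdom : ∀ v : φ.domain, φ v ≤ N v := by
    rintro ⟨v, hv⟩
    have hv2 : v ∈ Submodule.span ℝ {p} := hv
    obtain ⟨c, hc⟩ := Submodule.mem_span_singleton.1 hv2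
    subst hc
    have happ : φ ⟨c • p, hv⟩ = c * ‖p‖ := by
      have h6 := LinearPMap.mkSpanSingleton'_apply p ‖p‖ HH c hv
      exact h6
    rw [happ]
    rcases le_or_gt 0 c with hc0 | hc0
    · exact le_ciInf (fun t => key_eval c hc0 t)
    · have h7 : c * ‖p‖ ≤ 0 := mul_nonpos_of_nonpos_of_nonneg hc0.le (norm_nonneg _)
      exact h7.trans (N_nonneg _)
  obtain ⟨g, hg_ext, hg_le⟩ := exists_extension_of_le_sublinear φ N N_hom N_add hφdom
  have hbound : ∀ z : X, |g z| ≤ ‖z‖ := by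
    intro z
    rw [abs_le]
    constructor
    · have h1 : g (-z) ≤ N (-z) := hg_le _
      have h2 : N (-z) ≤ ‖(-z - (0:ℝ) • w) ⊔ 0‖ := N_le _ 0
      simp only [zero_smul, sub_zero] at h2
      have h3 : ‖(-z) ⊔ 0‖ ≤ ‖-z‖ := my_norm_posPart_le _
      rw [norm_neg] at h3
      have := (h1.trans h2).trans h3
      rw [map_neg] at this
      linarith
    · have h1 : g z ≤ N z := hg_le _
      have h2 : N z ≤ ‖(z - (0:ℝ) • w) ⊔ 0‖ := N_le _ 0
      simp only [zero_smul, sub_zero] at h2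
      exact (h1.trans h2).trans (my_norm_posPart_le _)
  set f : X →L[ℝ] ℝ := g.mkContinuous 1 (fun z => by
    rw [Real.norm_eq_abs, one_mul]; exact hbound z) with hfdef
  have hf_apply : ∀ z : X, f z = g z := fun z => rfl
  have hf_pos : ∀ z : X, 0 ≤ z → 0 ≤ f z := by
    intro z hz
    have h1 : g (-z) ≤ N (-z) := hg_le _
    have h2 : N (-z) ≤ ‖(-z - (0:ℝ) • w) ⊔ 0‖ := N_le _ 0
    have h3 : (-z) ⊔ 0 = 0 := sup_eq_right.2 (neg_nonpos.2 hz)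
    simp only [zero_smul, sub_zero] at h2
    rw [h3, norm_zero] at h2
    rw [hf_apply, ← neg_nonpos]
    rw [map_neg] at h1
    linarith
  have hfp : f p = ‖p‖ := by
    have hmem : p ∈ φ.domain := Submodule.mem_span_singleton_self p
    have h2 : f p = φ ⟨p, hmem⟩ := hg_ext ⟨p, hmem⟩
    rw [h2]
    exact LinearPMap.mkSpanSingleton'_apply_self p ‖p‖ HH hmem
  have hfw : f w = 0 := by
    have h1 : f w ≤ N w := hg_le _
    have h2 : N w ≤ ‖(w - (1:ℝ) • w) ⊔ 0‖ := N_le _ 1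
    simp only [one_smul, sub_self] at h2
    rw [show ((0:X) ⊔ 0) = 0 from sup_idem 0, norm_zero] at h2
    exact le_antisymm (h1.trans h2) (hf_pos w hw0)
  refine ⟨f, hf_pos, ?_, ?_⟩
  · apply le_antisymm
    · exact LinearMap.mkContinuous_norm_le g zero_le_one _
    · have hpn : (0:ℝ) < ‖p‖ := norm_pos_iff.2 hp
      have h1 : f (‖p‖⁻¹ • p) = 1 := by
        rw [map_smul, smul_eq_mul, hfp, inv_mul_cancel₀ hpn.ne']
      have h2 := f.le_opNorm (‖p‖⁻¹ • p)
      have h3 : ‖‖p‖⁻¹‖ = ‖p‖⁻¹ := by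
        rw [Real.norm_eq_abs, abs_of_pos (by positivity)]
      rw [h1, norm_smul, h3, inv_mul_cancel₀ hpn.ne', mul_one, norm_one] at h2
      exact h2
  · have : f x = f p - f w := by rw [← map_sub, my_posPart_sub]
    rw [this, hfp, hfw, sub_zero]

lemma my_opNorm_le (φ : X →L[ℝ] ℝ) {C : ℝ} (hC : 0 ≤ C)
    (h : ∀ z : X, ‖z‖ ≤ 1 → |φ z| ≤ C) : ‖φ‖ ≤ C := by
  apply ContinuousLinearMap.opNorm_le_bound φ hC
  intro z
  rcases eq_or_ne z 0 with rfl | hz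
  · simp
  · have hz0 : 0 < ‖z‖ := norm_pos_iff.2 hz
    have h1 := h (‖z‖⁻¹ • z) (by
      rw [norm_smul, Real.norm_eq_abs, abs_of_pos (by positivity), inv_mul_cancel₀ hz0.ne'])
    rw [map_smul, smul_eq_mul, abs_mul, abs_of_pos (by positivity : (0:ℝ) < ‖z‖⁻¹)] at h1
    rw [Real.norm_eq_abs]
    calc |φ z| = ‖z‖ * (‖z‖⁻¹ * |φ z|) := by field_simp
    _ ≤ ‖z‖ * C := by nlinarith [abs_nonneg (φ z)]
    _ = C * ‖z‖ := mul_comm _ _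

lemma my_backward (hBPB : StrongBPBppPositive X) : UniformlyMonotoneOrthogonal X := by
  intro ε hε hε1
  obtain ⟨η, hη0, hηε', hBP⟩ := hBPB (ε/2) (by linarith) (by linarith)
  refine ⟨η, hη0, by linarith, ?_⟩
  intro x hx1 hxp
  have hp0 : (0:ℝ) < ‖x ⊔ 0‖ := by linarith
  have hpne : x ⊔ 0 ≠ 0 := by
    intro hcon; rw [hcon, norm_zero] at hp0; linarith
  obtain ⟨f, hfpos, hfn, hfx⟩ := exists_pos_norming x hpne
  have hxn0 : (0:ℝ) < ‖x‖ := lt_of_lt_of_le hp0 (my_norm_posPart_le x)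
  set x₀ : X := ‖x‖⁻¹ • x with hx₀def
  have hx₀n : ‖x₀‖ = 1 := by
    rw [hx₀def, norm_smul (‖x‖⁻¹) x, Real.norm_eq_abs, abs_of_pos (by positivity),
      inv_mul_cancel₀ hxn0.ne']
  have hfx₀ : 1 - η < f x₀ := by
    have h1 : f x₀ = ‖x‖⁻¹ * ‖x ⊔ 0‖ := by rw [hx₀def, map_smul, smul_eq_mul, hfx]
    have h3 : 1 ≤ ‖x‖⁻¹ := by
      nlinarith [mul_inv_cancel₀ hxn0.ne', inv_pos.2 hxn0]
    have h2 : ‖x ⊔ 0‖ ≤ ‖x‖⁻¹ * ‖x ⊔ 0‖ := by nlinarith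
    linarith
  obtain ⟨y, g, hy0, hyn, hgpos, hgn, hgy, hyd, hgf⟩ := hBP f hfpos hfn x₀ hx₀n hfx₀
  have hyneg : (-y) ⊔ 0 = 0 := sup_eq_right.2 (neg_nonpos.2 hy0)
  have h4 : ‖(-x₀) ⊔ 0‖ ≤ ‖y - x₀‖ := by
    calc ‖(-x₀) ⊔ 0‖ = ‖(-x₀) ⊔ 0 - ((-y) ⊔ 0)‖ := by rw [hyneg, sub_zero]
    _ ≤ ‖(-x₀) - (-y)‖ := norm_sup_sub_sup_le_norm _ _ _
    _ = ‖y - x₀‖ := by rw [show -x₀ - -y = y - x₀ by abel]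
  have hxneg : -x = ‖x‖ • (-x₀) := by
    rw [hx₀def, smul_neg, smul_smul, mul_inv_cancel₀ hxn0.ne', one_smul]
  calc ‖(-x) ⊔ 0‖ = ‖(‖x‖ • (-x₀)) ⊔ 0‖ := by rw [hxneg]
  _ = ‖‖x‖ • ((-x₀) ⊔ 0)‖ := by rw [my_smul_posPart _ (norm_nonneg x)]
  _ = ‖x‖ * ‖(-x₀) ⊔ 0‖ := by
      rw [norm_smul (‖x‖) ((-x₀) ⊔ 0), Real.norm_eq_abs, abs_of_pos hxn0]
  _ ≤ 1 * ‖(-x₀) ⊔ 0‖ := mul_le_mul_of_nonneg_right hx1 (norm_nonneg _)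
  _ = ‖(-x₀) ⊔ 0‖ := one_mul _
  _ ≤ ‖y - x₀‖ := h4
  _ < ε/2 := hyd
  _ < ε := by linarith

lemma my_forward [CompleteSpace X]
    (hU : UniformlyMonotoneOrthogonal X) : StrongBPBppPositive X := by
  intro ε hε hε1
  obtain ⟨δ₁, hδ₁0, hδ₁ε, hUM⟩ := hU (ε/4) (by linarith) (by linarith)
  set η : ℝ := min δ₁ (ε^2/256) with hηdef
  have hη0 : 0 < η := lt_min hδ₁0 (by positivity)
  have hηδ : η ≤ δ₁ := min_le_left _ _
  have hηε2 : η ≤ ε^2/256 := min_le_right _ _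
  have hηε : η < ε := lt_of_le_of_lt hηε2 (by nlinarith)
  refine ⟨η, hη0, hηε, ?_⟩
  intro f hfpos hfn x₀ hx₀n hfx₀
  set s : ℝ := Real.sqrt η with hsdef
  have hs0 : 0 < s := Real.sqrt_pos.2 hη0
  have hsε : s ≤ ε/16 := by
    rw [hsdef]
    calc Real.sqrt η ≤ Real.sqrt (ε^2/256) := Real.sqrt_le_sqrt hηε2
    _ = ε/16 := by
      rw [show ε^2/256 = (ε/16)^2 by ring, Real.sqrt_sq (by linarith)]
  have hs1 : s < 1/16 := lt_of_le_of_lt hsε (by linarith)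
  have hηs : η ≤ s := by
    have h1 : s * s = η := Real.mul_self_sqrt hη0.le
    nlinarith
  have hden : (7:ℝ)/8 ≤ 1 - η - s := by linarith
  -- basic facts about f
  have hf_mono : ∀ z : X, f z ≤ f (z ⊔ 0) := by
    intro z
    have h1 : z ⊔ 0 - z = (-z) ⊔ 0 := by rw [sup_sub]; simp [sup_comm]
    have h2 : 0 ≤ f (z ⊔ 0 - z) := by rw [h1]; exact hfpos _ le_sup_right
    rw [map_sub] at h2; linarith
  have habs : ∀ z : X, |f z| ≤ ‖z‖ := by
    intro z
    have h1 := f.le_opNorm z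
    rw [hfn, one_mul, Real.norm_eq_abs] at h1
    exact h1
  have hf_le_norm : ∀ z : X, f z ≤ ‖z ⊔ 0‖ := by
    intro z
    calc f z ≤ f (z ⊔ 0) := hf_mono z
    _ ≤ |f (z ⊔ 0)| := le_abs_self _
    _ ≤ ‖z ⊔ 0‖ := habs _
  set D : Set X := {z | ‖z ⊔ 0‖ ≤ 1} with hDdef
  have hx₀D : x₀ ∈ D := by
    simp only [hDdef, Set.mem_setOf_eq]
    calc ‖x₀ ⊔ 0‖ ≤ ‖x₀‖ := my_norm_posPart_le x₀
    _ = 1 := hx₀n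
  have hDb : ∀ w ∈ D, f w ≤ 1 := fun w hw => (hf_le_norm w).trans hw
  have hDclosed : IsClosed D := by
    have h1 : D = (fun z : X => ‖z ⊔ 0‖) ⁻¹' (Set.Iic 1) := rfl
    rw [h1]
    apply IsClosed.preimage _ isClosed_Iic
    exact (continuous_id.sup continuous_const).norm
  have hDmem : ∀ z : X, ‖z‖ ≤ 1 → z ∈ D := fun z hz => le_trans (my_norm_posPart_le z) hz
  have hDconvex : Convex ℝ D := by
    intro z hz z' hz' t t' ht ht' htt'
    simp only [hDdef, Set.mem_setOf_eq] at *
    have h1 : (t • z + t' • z') ⊔ 0 ≤ t • (z ⊔ 0) + t' • (z' ⊔ 0) := by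
      apply sup_le
      · exact add_le_add (my_smul_le_smul _ ht le_sup_left) (my_smul_le_smul _ ht' le_sup_left)
      · exact add_nonneg (smul_nonneg ht le_sup_right) (smul_nonneg ht' le_sup_right)
    calc ‖(t • z + t' • z') ⊔ 0‖ ≤ ‖t • (z ⊔ 0) + t' • (z' ⊔ 0)‖ := my_norm_mono le_sup_right h1
    _ ≤ t * ‖z ⊔ 0‖ + t' * ‖z' ⊔ 0‖ := by
        refine (norm_add_le _ _).trans ?_
        rw [norm_smul, norm_smul, Real.norm_eq_abs, Real.norm_eq_abs, abs_of_nonneg ht,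
          abs_of_nonneg ht']
    _ ≤ t * 1 + t' * 1 := by
        have := mul_le_mul_of_nonneg_left hz ht
        have := mul_le_mul_of_nonneg_left hz' ht'
        linarith
    _ = 1 := by linarith
  obtain ⟨v, hvD, hvfx, hvclose, hvmax⟩ := my_ekeland D hDclosed f hDb x₀ hx₀D hs0
  have hfv1 : f v ≤ 1 := hDb v hvD
  have hfv : 1 - η < f v := lt_of_lt_of_le hfx₀ hvfx
  have hvx₀ : ‖v - x₀‖ ≤ s := by
    have h1 : s * ‖v - x₀‖ ≤ 1 - f x₀ := le_trans hvclose (by linarith)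
    have h2 : 1 - f x₀ < η := by linarith
    have h3 : s * s = η := Real.mul_self_sqrt hη0.le
    nlinarith [norm_nonneg (v - x₀)]
  -- the cone K
  set K : Set X := {z | s * ‖z‖ ≤ f z} with hKdef
  have hKconv : Convex ℝ K := by
    intro z hz z' hz' t t' ht ht' htt'
    simp only [hKdef, Set.mem_setOf_eq] at *
    have h1 : ‖t • z + t' • z'‖ ≤ t * ‖z‖ + t' * ‖z'‖ := by
      refine (norm_add_le _ _).trans ?_
      rw [norm_smul, norm_smul, Real.norm_eq_abs, Real.norm_eq_abs, abs_of_nonneg ht,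
        abs_of_nonneg ht']
    have h2 : f (t • z + t' • z') = t * f z + t' * f z' := by
      rw [map_add, map_smul, map_smul, smul_eq_mul, smul_eq_mul]
    nlinarith
  have hK0 : (0:X) ∈ K := by simp [hKdef]
  -- interior point of K
  obtain ⟨x₁, hx₁n, hx₁f⟩ : ∃ x₁ : X, ‖x₁‖ ≤ 1 ∧ 3/4 < f x₁ := by
    obtain ⟨z, hz1, hz2⟩ := f.exists_lt_apply_of_lt_opNorm
      (show (3:ℝ)/4 < ‖f‖ by rw [hfn]; norm_num)
    rcases le_or_gt (f z) 0 with h | h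
    · refine ⟨-z, by rw [norm_neg]; exact hz1.le, ?_⟩
      rw [map_neg]
      rw [Real.norm_eq_abs, abs_of_nonpos h] at hz2
      linarith
    · refine ⟨z, hz1.le, ?_⟩
      rw [Real.norm_eq_abs, abs_of_pos h] at hz2
      linarith
  have hx₁0 : x₁ ≠ 0 := by
    intro hcon
    rw [hcon, map_zero] at hx₁f
    linarith
  have hballK : Metric.ball x₁ (1/4) ⊆ K := by
    intro w hw
    rw [Metric.mem_ball, dist_eq_norm] at hw
    simp only [hKdef, Set.mem_setOf_eq]
    have h1 : f w - f x₁ = f (w - x₁) := by rw [map_sub]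
    have h2 : |f (w - x₁)| ≤ ‖w - x₁‖ := habs _
    have h3 : ‖w‖ ≤ ‖x₁‖ + ‖w - x₁‖ := by
      calc ‖w‖ = ‖x₁ + (w - x₁)‖ := by rw [show x₁ + (w - x₁) = w by abel]
      _ ≤ ‖x₁‖ + ‖w - x₁‖ := norm_add_le _ _
    have h4 : 1/2 ≤ f w := by
      have := abs_le.1 h2
      linarith
    have h5 : s * ‖w‖ ≤ s * (5/4) := by nlinarith [norm_nonneg (w - x₁)]
    nlinarith
  have hx₁K : x₁ ∈ interior K :=
    interior_maximal hballK Metric.isOpen_ball (Metric.mem_ball_self (by norm_num))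
  -- convex combination into the interior
  have hcomb : ∀ z ∈ K, ∀ t : ℝ, 0 < t → t ≤ 1 → (1 - t) • z + t • x₁ ∈ interior K := by
    intro z hz t ht0 ht1
    have hball2 : Metric.ball ((1 - t) • z + t • x₁) (t * (1/4)) ⊆ K := by
      intro w hw
      rw [Metric.mem_ball, dist_eq_norm] at hw
      set e : X := w - ((1 - t) • z + t • x₁) with hedef
      have hwe : w = (1 - t) • z + t • (x₁ + t⁻¹ • e) := by
        rw [smul_add, smul_smul, mul_inv_cancel₀ ht0.ne', one_smul, hedef]
        abel
      have hmem : x₁ + t⁻¹ • e ∈ Metric.ball x₁ (1/4) := by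
        rw [Metric.mem_ball, dist_eq_norm]
        rw [show x₁ + t⁻¹ • e - x₁ = t⁻¹ • e by abel]
        rw [norm_smul, Real.norm_eq_abs, abs_of_pos (by positivity)]
        rw [show (e:X) = w - ((1 - t) • z + t • x₁) from rfl]
        calc t⁻¹ * ‖w - ((1 - t) • z + t • x₁)‖ < t⁻¹ * (t * (1/4)) := by
              apply mul_lt_mul_of_pos_left _ (by positivity)
              exact hw
        _ = 1/4 := by field_simp
      rw [hwe]
      exact hKconv hz (hballK hmem) (by linarith) ht0.le (by ring)
    exact interior_maximal hball2 Metric.isOpen_ball (Metric.mem_ball_self (by positivity))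
  -- the open set U
  set U : Set X := (fun z => v + z) '' interior K with hUdef
  have hUopen : IsOpen U := (isOpenMap_add_left v) _ isOpen_interior
  have hUconv : Convex ℝ U := (hKconv.interior).translate v
  have hdisjoint : Disjoint U D := by
    rw [Set.disjoint_left]
    rintro w ⟨z, hzint, rfl⟩ hwD
    have hzK : z ∈ K := interior_subset hzint
    rcases eq_or_ne z 0 with rfl | hz0
    · obtain ⟨r, hr0, hball⟩ := Metric.isOpen_iff.1 isOpen_interior 0 hzint
      set z' : X := (r/2) • x₁ with hz'def
      have hz'n : ‖z'‖ < r := by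
        rw [hz'def, norm_smul, Real.norm_eq_abs, abs_of_pos (by positivity)]
        nlinarith [norm_nonneg x₁]
      have h1 : z' ∈ K := interior_subset (hball (by rw [Metric.mem_ball, dist_zero_right]; exact hz'n))
      have h2 : -z' ∈ K := interior_subset (hball (by rw [Metric.mem_ball, dist_zero_right, norm_neg]; exact hz'n))
      simp only [hKdef, Set.mem_setOf_eq] at h1 h2
      rw [norm_neg, map_neg] at h2
      have h3 : ‖z'‖ = 0 := by nlinarith [norm_nonneg z']
      have h4 : z' ≠ 0 := smul_ne_zero (by positivity) hx₁0
      exact h4 (norm_eq_zero.1 h3)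
    · have hwv : v + z ≠ v := fun hcon => hz0 (by
        have := congrArg (fun a => a - v) hcon
        simpa using this)
      have h1 := hvmax (v + z) hwD hwv
      have h2 : s * ‖z‖ ≤ f z := hzK
      have h3 : f (v + z) = f v + f z := map_add f v z
      rw [show v + z - v = z by abel] at h1
      nlinarith
  obtain ⟨g₀, u, hg₀U, hg₀D⟩ := geometric_hahn_banach_open hUconv hUopen hDconvex hdisjoint
  set h : X →L[ℝ] ℝ := -g₀ with hhdef
  have hU_gt : ∀ a ∈ U, -u < h a := by
    intro a ha
    have := hg₀U a ha
    simp only [hhdef, ContinuousLinearMap.neg_apply]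
    linarith
  have hD_le : ∀ b ∈ D, h b ≤ -u := by
    intro b hb
    have := hg₀D b hb
    simp only [hhdef, ContinuousLinearMap.neg_apply]
    linarith
  have hmemU : ∀ z ∈ interior K, v + z ∈ U := fun z hz => ⟨z, hz, rfl⟩
  -- h v = -u
  have hvh_le : h v ≤ -u := hD_le v hvD
  have hvh_ge : -u ≤ h v := by
    by_contra hcon
    push_neg at hcon
    set t : ℝ := min 1 ((-u - h v) / (1 + |h x₁|)) with htdef
    have ht0 : 0 < t := lt_min one_pos (div_pos (by linarith) (by positivity))
    have ht1 : t ≤ 1 := min_le_left _ _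
    have ht2 : t * (1 + |h x₁|) ≤ -u - h v := by
      have := min_le_right 1 ((-u - h v) / (1 + |h x₁|))
      rw [htdef]
      calc (min 1 ((-u - h v) / (1 + |h x₁|))) * (1 + |h x₁|)
          ≤ ((-u - h v) / (1 + |h x₁|)) * (1 + |h x₁|) := by
            apply mul_le_mul_of_nonneg_right this (by positivity)
      _ = -u - h v := by field_simp
    have hmem1 : v + t • x₁ ∈ U := by
      apply hmemU
      have := hcomb 0 hK0 t ht0 ht1
      simpa using this
    have h1 := hU_gt _ hmem1
    rw [map_add, map_smul, smul_eq_mul] at h1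
    have h2 : t * h x₁ ≤ t * |h x₁| := by
      apply mul_le_mul_of_nonneg_left (le_abs_self _) ht0.le
    linarith
  have hv_eq : h v = -u := le_antisymm hvh_le hvh_ge
  -- h nonneg on K
  have hKpos : ∀ z ∈ K, 0 ≤ h z := by
    intro z hzK
    by_contra hcon
    push_neg at hcon
    set B : ℝ := |h z| + |h x₁| + 1 with hBdef
    have hB0 : 0 < B := by positivity
    set t : ℝ := min (1/2) (-h z / (2 * B)) with htdef
    have ht0 : 0 < t := lt_min (by norm_num) (div_pos (by linarith) (by positivity))
    have ht1 : t ≤ 1 := le_trans (min_le_left _ _) (by norm_num)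
    have htB : t * B ≤ -h z / 2 := by
      have h2 := min_le_right (1/2 : ℝ) (-h z / (2 * B))
      rw [htdef]
      calc (min (1/2 : ℝ) (-h z / (2*B))) * B ≤ (-h z / (2*B)) * B := by
            apply mul_le_mul_of_nonneg_right h2 hB0.le
      _ = -h z / 2 := by field_simp
    have hmem1 : v + ((1 - t) • z + t • x₁) ∈ U := hmemU _ (hcomb z hzK t ht0 ht1)
    have h1 := hU_gt _ hmem1
    rw [map_add, map_add, map_smul, map_smul, smul_eq_mul, smul_eq_mul] at h1
    -- -u < h v + (1-t) h z + t h x₁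
    rw [hv_eq] at h1
    have h3 : (1 - t) * h z + t * h x₁ ≤ h z + t * (|h z| + |h x₁|) := by
      have e1 : (1 - t) * h z = h z - t * h z := by ring
      have e2 : -(t * h z) ≤ t * |h z| := by
        rw [← mul_neg]
        exact mul_le_mul_of_nonneg_left (neg_le_abs _) ht0.le
      have e3 : t * h x₁ ≤ t * |h x₁| := mul_le_mul_of_nonneg_left (le_abs_self _) ht0.le
      linarith
    have h4 : t * (|h z| + |h x₁|) ≤ t * B := by
      apply mul_le_mul_of_nonneg_left _ ht0.le
      rw [hBdef]; linarith
    linarith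
  -- h nonneg on the positive cone
  have hpos : ∀ z : X, 0 ≤ z → 0 ≤ h z := by
    intro z hz
    have h1 : v - z ∈ D := by
      simp only [hDdef, Set.mem_setOf_eq]
      have h2 : (v - z) ⊔ 0 ≤ v ⊔ 0 := sup_le_sup_right (sub_le_self v hz) 0
      calc ‖(v - z) ⊔ 0‖ ≤ ‖v ⊔ 0‖ := my_norm_mono le_sup_right h2
      _ ≤ 1 := hvD
    have h3 : h (v - z) ≤ -u := hD_le _ h1
    rw [map_sub, hv_eq] at h3
    linarith
  -- h x₁ > 0, so h ≠ 0
  have hx₁h : 0 < h x₁ := by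
    have h1 := hU_gt _ (hmemU x₁ hx₁K)
    rw [map_add, hv_eq] at h1
    linarith
  -- h v = ‖h‖
  have hv0 : 0 ≤ h v := by
    have h0D : (0:X) ∈ D := by simp [hDdef]
    have := hD_le 0 h0D
    rw [map_zero] at this
    rw [hv_eq]
    linarith
  have hnorm_le : ‖h‖ ≤ h v := by
    apply my_opNorm_le h hv0
    intro z hz
    rw [abs_le]
    constructor
    · have h1 := hD_le (-z) (hDmem _ (by rw [norm_neg]; exact hz))
      rw [map_neg] at h1
      rw [hv_eq]
      linarith
    · have h1 := hD_le z (hDmem _ hz)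
      rw [hv_eq]
      linarith
  have hvpp : h v ≤ h (v ⊔ 0) := by
    have h1 : v ⊔ 0 - v = (-v) ⊔ 0 := by rw [sup_sub]; simp [sup_comm]
    have h2 : 0 ≤ h (v ⊔ 0 - v) := by rw [h1]; exact hpos _ le_sup_right
    rw [map_sub] at h2
    linarith
  have habs_h : |h (v ⊔ 0)| ≤ ‖h‖ * ‖v ⊔ 0‖ := by
    have := h.le_opNorm (v ⊔ 0)
    rwa [Real.norm_eq_abs] at this
  have hnorm_eq : ‖h‖ = h v := by
    apply le_antisymm hnorm_le
    calc h v ≤ h (v ⊔ 0) := hvpp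
    _ ≤ |h (v ⊔ 0)| := le_abs_self _
    _ ≤ ‖h‖ * ‖v ⊔ 0‖ := habs_h
    _ ≤ ‖h‖ * 1 := by
        apply mul_le_mul_of_nonneg_left hvD (norm_nonneg _)
    _ = ‖h‖ := mul_one _
  have hh_pos : 0 < ‖h‖ := by
    have h1 : |h x₁| ≤ ‖h‖ * ‖x₁‖ := by
      have := h.le_opNorm x₁
      rwa [Real.norm_eq_abs] at this
    have h2 : h x₁ ≤ ‖h‖ := by
      calc h x₁ ≤ |h x₁| := le_abs_self _
      _ ≤ ‖h‖ * ‖x₁‖ := h1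
      _ ≤ ‖h‖ * 1 := mul_le_mul_of_nonneg_left hx₁n (norm_nonneg _)
      _ = ‖h‖ := mul_one _
    linarith
  have hpp_eq : h (v ⊔ 0) = ‖h‖ := by
    apply le_antisymm
    · calc h (v ⊔ 0) ≤ |h (v ⊔ 0)| := le_abs_self _
      _ ≤ ‖h‖ * ‖v ⊔ 0‖ := habs_h
      _ ≤ ‖h‖ * 1 := mul_le_mul_of_nonneg_left hvD (norm_nonneg _)
      _ = ‖h‖ := mul_one _
    · rw [hnorm_eq]; exact hvpp
  have hvp1 : ‖v ⊔ 0‖ = 1 := by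
    apply le_antisymm hvD
    have h1 : ‖h‖ ≤ ‖h‖ * ‖v ⊔ 0‖ := by
      calc ‖h‖ = h (v ⊔ 0) := hpp_eq.symm
      _ ≤ |h (v ⊔ 0)| := le_abs_self _
      _ ≤ ‖h‖ * ‖v ⊔ 0‖ := habs_h
    nlinarith
  set y : X := v ⊔ 0 with hydef
  set g : X →L[ℝ] ℝ := ‖h‖⁻¹ • h with hgdef
  have hg_apply : ∀ z : X, g z = ‖h‖⁻¹ * h z := fun z => rfl
  have hgpos : ∀ z : X, 0 ≤ z → 0 ≤ g z := by
    intro z hz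
    rw [hg_apply]
    have := hpos z hz
    positivity
  have hgn : ‖g‖ = 1 := by
    rw [hgdef, norm_smul (‖h‖⁻¹) h, Real.norm_eq_abs, abs_of_pos (by positivity),
      inv_mul_cancel₀ hh_pos.ne']
  have hgy : g y = 1 := by
    rw [hg_apply, hydef, hpp_eq, inv_mul_cancel₀ hh_pos.ne']
  -- closeness of y to x₀
  have hx₀p : 1 - δ₁ < ‖x₀ ⊔ 0‖ := by
    have h1 : f x₀ ≤ ‖x₀ ⊔ 0‖ := hf_le_norm x₀
    linarith
  have hx₀neg : ‖(-x₀) ⊔ 0‖ < ε/4 := hUM x₀ (le_of_eq hx₀n) hx₀p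
  have hyx₀ : ‖y - x₀‖ < ε := by
    have h1 : ‖y - x₀ ⊔ 0‖ ≤ ‖v - x₀‖ := norm_sup_sub_sup_le_norm v x₀ 0
    have h2 : x₀ ⊔ 0 - x₀ = (-x₀) ⊔ 0 := by rw [sup_sub]; simp [sup_comm]
    calc ‖y - x₀‖ = ‖(y - x₀ ⊔ 0) + (x₀ ⊔ 0 - x₀)‖ := by rw [show (y - x₀ ⊔ 0) + (x₀ ⊔ 0 - x₀) = y - x₀ by abel]
    _ ≤ ‖y - x₀ ⊔ 0‖ + ‖x₀ ⊔ 0 - x₀‖ := norm_add_le _ _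
    _ ≤ ‖v - x₀‖ + ‖(-x₀) ⊔ 0‖ := by rw [h2]; exact add_le_add h1 le_rfl
    _ < s + ε/4 := add_lt_add_of_le_of_lt hvx₀ hx₀neg
    _ ≤ ε/16 + ε/4 := by linarith
    _ < ε := by linarith
  -- f y close to 1
  have hfy : 1 - η < f y := lt_of_lt_of_le hfv (hf_mono v)
  have hfy1 : f y ≤ 1 := by
    calc f y ≤ |f y| := le_abs_self _
    _ ≤ ‖y‖ := habs y
    _ = 1 := hvp1
  -- the Phelps estimate
  have L1 : ∀ z : X, ‖z‖ ≤ 1 → f z ≤ s → (f z - s)/(1 - η - s) ≤ g z := by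
    intro z hz hzf
    set r : ℝ := (s - f z)/(1 - η - s) with hrdef
    have hr0 : 0 ≤ r := div_nonneg (by linarith) (by linarith)
    have hreq : r * (1 - η - s) = s - f z := by
      rw [hrdef]; field_simp
    have hzz : z + r • y ∈ K := by
      simp only [hKdef, Set.mem_setOf_eq]
      have h1 : f (z + r • y) = f z + r * f y := by rw [map_add, map_smul, smul_eq_mul]
      have h2 : ‖z + r • y‖ ≤ 1 + r := by
        calc ‖z + r • y‖ ≤ ‖z‖ + ‖r • y‖ := norm_add_le _ _
        _ = ‖z‖ + r * ‖y‖ := by rw [norm_smul, Real.norm_eq_abs, abs_of_nonneg hr0]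
        _ ≤ 1 + r := by rw [hvp1]; linarith
      have h3 : s * ‖z + r • y‖ ≤ s * (1 + r) := mul_le_mul_of_nonneg_left h2 hs0.le
      have h4 : s * (1 + r) ≤ f z + r * (1 - η) := by linarith [hreq]
      have h5 : r * (1 - η) ≤ r * f y := mul_le_mul_of_nonneg_left hfy.le hr0
      have h6 : s * ‖z + r • y‖ ≤ f (z + r • y) := by rw [h1]; linarith
      exact h6
    have h4 := hKpos _ hzz
    have h5 : 0 ≤ g (z + r • y) := by
      rw [hg_apply]
      positivity
    have h6 : g (z + r • y) = g z + r * g y := by rw [map_add, map_smul, smul_eq_mul]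
    rw [hgy, mul_one] at h6
    have h7 : (f z - s)/(1 - η - s) = -r := by
      rw [hrdef, ← neg_div, neg_sub]
    rw [h7]
    linarith [h6 ▸ h5]
  have main : ∀ z : X, ‖z‖ ≤ 1 → f z - g z ≤ (2*s + η)/(1 - η - s) := by
    intro z hz
    have hfz1 : f z ≤ 1 := by
      calc f z ≤ |f z| := le_abs_self _
      _ ≤ ‖z‖ := habs z
      _ ≤ 1 := hz
    have hfzm : -1 ≤ f z := by
      have h1 : |f z| ≤ 1 := (habs z).trans hz
      linarith [abs_le.1 h1]
    rcases le_or_gt (f z) s with hc | hc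
    · have h1 := L1 z hz hc
      have h1' : f z - s ≤ g z * (1 - η - s) := by
        rw [div_le_iff₀ (by linarith)] at h1
        linarith
      rw [le_div_iff₀ (by linarith)]
      have h8 : 0 ≤ (1 + f z) * (η + s) :=
        mul_nonneg (by linarith) (by linarith)
      linarith [h1', h8]
    · set w' : X := (1/2 : ℝ) • (z - f z • y) with hw'def
      have hw'n : ‖w'‖ ≤ 1 := by
        rw [hw'def, norm_smul, Real.norm_eq_abs]
        have h1 : ‖z - f z • y‖ ≤ ‖z‖ + ‖f z • y‖ := norm_sub_le _ _
        have h2 : ‖f z • y‖ = |f z| * ‖y‖ := by rw [norm_smul, Real.norm_eq_abs]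
        have h3 : |f z| ≤ 1 := (habs z).trans hz
        rw [hvp1] at h2
        rw [abs_of_pos (by norm_num : (0:ℝ) < 1/2)]
        linarith
      have hfw' : f w' = (1/2) * (f z - f z * f y) := by
        rw [hw'def, map_smul, smul_eq_mul, map_sub, map_smul, smul_eq_mul]
      have hfz0 : 0 ≤ f z := le_of_lt (lt_of_le_of_lt hs0.le hc)
      have hfw'0 : 0 ≤ f w' := by
        rw [hfw']
        have h9 : f z * f y ≤ f z * 1 := mul_le_mul_of_nonneg_left hfy1 hfz0
        linarith
      have hfw's : f w' ≤ s := by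
        rw [hfw']
        have h10 : f z * (1 - f y) ≤ f z * η :=
          mul_le_mul_of_nonneg_left (by linarith) hfz0
        have h11 : f z * η ≤ 1 * η := mul_le_mul_of_nonneg_right hfz1 hη0.le
        linarith [h10, h11]
      have h1 := L1 w' hw'n hfw's
      have h1' : f w' - s ≤ g w' * (1 - η - s) := by
        rw [div_le_iff₀ (by linarith)] at h1
        linarith
      have hgw' : g w' = (1/2) * (g z - f z) := by
        rw [hw'def, map_smul, smul_eq_mul, map_sub, map_smul, smul_eq_mul, hgy, mul_one]
      rw [le_div_iff₀ (by linarith)]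
      rw [hgw'] at h1'
      linarith [h1', hfw'0]
  have hfg : ‖g - f‖ < ε := by
    have hA0 : 0 ≤ (2*s + η)/(1 - η - s) := div_nonneg (by linarith) (by linarith)
    have hb2 : ∀ z : X, ‖z‖ ≤ 1 → |(g - f) z| ≤ (2*s + η)/(1 - η - s) := by
      intro z hz
      rw [ContinuousLinearMap.sub_apply, abs_le]
      constructor
      · have h1 := main z hz
        linarith
      · have h1 := main (-z) (by rw [norm_neg]; exact hz)
        rw [map_neg, map_neg] at h1
        linarith
    have h2 : ‖g - f‖ ≤ (2*s + η)/(1 - η - s) := my_opNorm_le _ hA0 hb2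
    have h3 : (2*s + η)/(1 - η - s) ≤ ε/4 := by
      rw [div_le_iff₀ (by linarith)]
      have h4 : ε * (7/8) ≤ ε * (1 - η - s) := mul_le_mul_of_nonneg_left hden hε.le
      linarith [h4, hsε, hηs]
    linarith
  exact ⟨y, g, le_sup_right, hvp1, hgpos, hgn, hgy, hyx₀, hfg⟩

end Main

/-- A Banach lattice is uniformly monotone for orthogonal elements iff it has
the strong Bishop–Phelps–Bollobás property for positive functionals. -/
theorem stmt3 (X : Type*) [NormedAddCommGroup X] [Lattice X] [IsOrderedAddMonoid X] [HasSolidNorm X] [NormedSpace ℝ X]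
    [PosSMulStrictMono ℝ X] [PosSMulReflectLT ℝ X] [CompleteSpace X] :
    UniformlyMonotoneOrthogonal X ↔ StrongBPBppPositive X := by
  exact ⟨fun h => my_forward h, fun h => my_backward h⟩
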